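/- Let A and B be disjoint sets each of cardinality n > 1, and let H be the 3-uniform hypergraph on A ∪ B whose hyperedges are all triples meeting both A and B. Then cf(H) = 2 and um(H) ≥ n. -/
import Mathlib


def IsCFColoring {V : Type*} (E : Finset (Finset V)) (C : V → ℕ) : Prop :=
  ∀ e ∈ E, e.Nonempty → ∃ x ∈ e, ∀ y ∈ e, y ≠ x → C y ≠ C x

def IsUMColoring {V : Type*} (E : Finset (Finset V)) (C : V → ℕ) : Prop :=
  ∀ e ∈ E, e.Nonempty → ∃ x ∈ e, ∀ y ∈ e, y ≠ x → C y < C x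

noncomputable def cfNum {V : Type*} (E : Finset (Finset V)) : ℕ :=
  sInf {k | ∃ C : V → ℕ, (∀ v, C v < k) ∧ IsCFColoring E C}

noncomputable def umNum {V : Type*} (E : Finset (Finset V)) : ℕ :=
  sInf {k | ∃ C : V → ℕ, (∀ v, C v < k) ∧ IsUMColoring E C}

lemma triple_mem_E {V : Type*} [DecidableEq V]
    (A B : Finset V) (hd : Disjoint A B)
    {u v b : V} (hu : u ∈ A) (hv : v ∈ A) (hb : b ∈ B) (huv : u ≠ v) :
    ({u, v, b} : Finset V) ∈ ((A ∪ B).powersetCard 3).filter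
      (fun e => (e ∩ A).Nonempty ∧ (e ∩ B).Nonempty) := by
  have hbu : b ≠ u := fun h => (Finset.disjoint_left.mp hd hu) (h ▸ hb)
  have hbv : b ≠ v := fun h => (Finset.disjoint_left.mp hd hv) (h ▸ hb)
  refine Finset.mem_filter.mpr ⟨Finset.mem_powersetCard.mpr ⟨?_, ?_⟩, ?_, ?_⟩
  · intro x hx
    simp only [Finset.mem_insert, Finset.mem_singleton] at hx
    rcases hx with rfl | rfl | rfl
    · exact Finset.mem_union_left _ hu
    · exact Finset.mem_union_left _ hv
    · exact Finset.mem_union_right _ hb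
  · rw [Finset.card_insert_of_notMem, Finset.card_insert_of_notMem,
      Finset.card_singleton]
    · simp [hbv.symm]
    · simp [huv, hbu.symm]
  · exact ⟨u, Finset.mem_inter.mpr ⟨by simp, hu⟩⟩
  · exact ⟨b, Finset.mem_inter.mpr ⟨by simp, hb⟩⟩

theorem cf_two_um_ge_n {V : Type*} [Fintype V] [DecidableEq V]
    (A B : Finset V) (n : ℕ) (hd : Disjoint A B)
    (hA : A.card = n) (hB : B.card = n) (hn : 1 < n)
    (E : Finset (Finset V))
    (hE : E = ((A ∪ B).powersetCard 3).filter
      (fun e => (e ∩ A).Nonempty ∧ (e ∩ B).Nonempty)) :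
    cfNum E = 2 ∧ n ≤ umNum E := by
  classical
  -- basic elements
  have hA2 : 1 < A.card := hA ▸ hn
  have hB2 : 1 < B.card := hB ▸ hn
  obtain ⟨a1, ha1, a2, ha2, ha12⟩ := Finset.one_lt_card.mp hA2
  obtain ⟨b1, hb1, b2, hb2, hb12⟩ := Finset.one_lt_card.mp hB2
  -- generic edge facts
  have edgeA : ∀ {u v b : V}, u ∈ A → v ∈ A → b ∈ B → u ≠ v →
      ({u, v, b} : Finset V) ∈ E := by
    intro u v b hu hv hb huv
    rw [hE]; exact triple_mem_E A B hd hu hv hb huv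
  have edgeB : ∀ {u v a : V}, u ∈ B → v ∈ B → a ∈ A → u ≠ v →
      ({u, v, a} : Finset V) ∈ E := by
    intro u v a hu hv ha huv
    rw [hE]
    have h := triple_mem_E B A hd.symm hu hv ha huv
    simp only [Finset.mem_filter, Finset.mem_powersetCard] at h ⊢
    refine ⟨⟨?_, h.1.2⟩, h.2.2, h.2.1⟩
    intro x hx
    exact Finset.union_comm A B ▸ h.1.1 hx
  -- CF part
  have h2mem : 2 ∈ {k | ∃ C : V → ℕ, (∀ v, C v < k) ∧ IsCFColoring E C} := by
    refine ⟨fun v => if v ∈ B then 1 else 0, fun v => by by_cases hv : v ∈ B <;> simp [hv], ?_⟩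
    intro e heE hene
    rw [hE] at heE
    simp only [Finset.mem_filter, Finset.mem_powersetCard] at heE
    obtain ⟨⟨hsub, hcard⟩, ⟨hAne, hBne⟩⟩ := heE
    have heq : (e ∩ A) ∪ (e ∩ B) = e := by
      rw [← Finset.inter_union_distrib_left]
      exact Finset.inter_eq_left.mpr hsub
    have hdisj : Disjoint (e ∩ A) (e ∩ B) :=
      hd.mono Finset.inter_subset_right Finset.inter_subset_right
    have hcards : (e ∩ A).card + (e ∩ B).card = 3 := by
      rw [← Finset.card_union_of_disjoint hdisj, heq, hcard]
    have hAne' := Finset.card_pos.mpr hAne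
    have hBne' := Finset.card_pos.mpr hBne
    have h1 : (e ∩ A).card = 1 ∨ (e ∩ B).card = 1 := by omega
    rcases h1 with h1 | h1
    · obtain ⟨x, hx⟩ := Finset.card_eq_one.mp h1
      have hxA : x ∈ e ∩ A := hx ▸ Finset.mem_singleton_self x
      refine ⟨x, (Finset.mem_inter.mp hxA).1, ?_⟩
      intro y hy hyx
      have hyB : y ∈ B := by
        rcases Finset.mem_union.mp (hsub hy) with h | h
        · exact absurd (hx ▸ Finset.mem_inter.mpr ⟨hy, h⟩ : y ∈ ({x} : Finset V))
            (by simpa using hyx)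
        · exact h
      have hxB : x ∉ B := Finset.disjoint_left.mp hd (Finset.mem_inter.mp hxA).2
      simp [hyB, hxB]
    · obtain ⟨x, hx⟩ := Finset.card_eq_one.mp h1
      have hxB : x ∈ e ∩ B := hx ▸ Finset.mem_singleton_self x
      refine ⟨x, (Finset.mem_inter.mp hxB).1, ?_⟩
      intro y hy hyx
      have hyA : y ∈ A := by
        rcases Finset.mem_union.mp (hsub hy) with h | h
        · exact h
        · exact absurd (hx ▸ Finset.mem_inter.mpr ⟨hy, h⟩ : y ∈ ({x} : Finset V))
            (by simpa using hyx)
      have hyB : y ∉ B := Finset.disjoint_left.mp hd hyA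
      simp [hyB, (Finset.mem_inter.mp hxB).2]
  have hcf : cfNum E = 2 := by
    refine le_antisymm (Nat.sInf_le h2mem) ?_
    have hmem := Nat.sInf_mem ⟨2, h2mem⟩
    obtain ⟨C, hClt, hCF⟩ := hmem
    by_contra h
    push_neg at h
    have he : ({a1, a2, b1} : Finset V) ∈ E := edgeA ha1 ha2 hb1 ha12
    obtain ⟨x, hx, hux⟩ := hCF _ he ⟨a1, by simp⟩
    have hlt2 : sInf {k | ∃ C : V → ℕ, (∀ v, C v < k) ∧ IsCFColoring E C} ≤ 1 :=
      Nat.lt_succ_iff.mp h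
    have hC0 : ∀ v, C v = 0 := fun v =>
      Nat.lt_one_iff.mp (lt_of_lt_of_le (hClt v) hlt2)
    simp only [Finset.mem_insert, Finset.mem_singleton] at hx
    have hb1a1 : b1 ≠ a1 := fun h' => Finset.disjoint_left.mp hd ha1 (h' ▸ hb1)
    have hb1a2 : b1 ≠ a2 := fun h' => Finset.disjoint_left.mp hd ha2 (h' ▸ hb1)
    rcases hx with rfl | rfl | rfl
    · exact hux a2 (by simp) ha12.symm (by simp [hC0])
    · exact hux a1 (by simp) ha12 (by simp [hC0])
    · exact hux a1 (by simp) hb1a1.symm (by simp [hC0])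
  refine ⟨hcf, ?_⟩
  -- UM part
  have hSne : {k | ∃ C : V → ℕ, (∀ v, C v < k) ∧ IsUMColoring E C}.Nonempty := by
    refine ⟨Fintype.card V, fun v => ((Fintype.equivFin V) v).val,
      fun v => ((Fintype.equivFin V) v).isLt, ?_⟩
    intro e _ hene
    obtain ⟨x, hx, hmax⟩ := e.exists_max_image (fun v => ((Fintype.equivFin V) v).val) hene
    refine ⟨x, hx, fun y hy hyx => ?_⟩
    have hne : ((Fintype.equivFin V) y).val ≠ ((Fintype.equivFin V) x).val := by
      intro h
      exact hyx ((Fintype.equivFin V).injective (Fin.val_injective h))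
    exact lt_of_le_of_ne (hmax y hy) hne
  have hmem := Nat.sInf_mem hSne
  obtain ⟨C, hClt, hUM⟩ := hmem
  set k := umNum E with hk
  by_contra h
  push_neg at h
  -- pigeonhole on A and on B
  have hpA : ∃ u ∈ A, ∃ v ∈ A, u ≠ v ∧ C u = C v := by
    have := Finset.exists_ne_map_eq_of_card_lt_of_maps_to
      (s := A) (t := Finset.range k) (by rw [hA, Finset.card_range]; omega)
      (fun a _ => Finset.mem_range.mpr (hClt a))
    obtain ⟨u, hu, v, hv, huv, heq⟩ := this
    exact ⟨u, hu, v, hv, huv, heq⟩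
  have hpB : ∃ u ∈ B, ∃ v ∈ B, u ≠ v ∧ C u = C v := by
    have := Finset.exists_ne_map_eq_of_card_lt_of_maps_to
      (s := B) (t := Finset.range k) (by rw [hB, Finset.card_range]; omega)
      (fun a _ => Finset.mem_range.mpr (hClt a))
    obtain ⟨u, hu, v, hv, huv, heq⟩ := this
    exact ⟨u, hu, v, hv, huv, heq⟩
  obtain ⟨u, hu, v, hv, huv, hCuv⟩ := hpA
  obtain ⟨s, hs, t, ht, hst, hCst⟩ := hpB
  -- edge {u, v, s} forces C u < C s
  have h1 : C u < C s := by
    obtain ⟨x, hx, hmax⟩ := hUM _ (edgeA hu hv hs huv) ⟨u, by simp⟩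
    have hsu : s ≠ u := fun h' => Finset.disjoint_left.mp hd hu (h' ▸ hs)
    have hsv : s ≠ v := fun h' => Finset.disjoint_left.mp hd hv (h' ▸ hs)
    simp only [Finset.mem_insert, Finset.mem_singleton] at hx
    rcases hx with rfl | rfl | rfl
    · exact absurd (hmax v (by simp) huv.symm) (by omega)
    · exact absurd (hmax u (by simp) huv) (by omega)
    · exact hmax u (by simp) hsu.symm
  -- edge {s, t, u} forces C s < C u
  have h2 : C s < C u := by
    obtain ⟨x, hx, hmax⟩ := hUM _ (edgeB hs ht hu hst) ⟨s, by simp⟩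
    have hus : u ≠ s := fun h' => Finset.disjoint_left.mp hd hu (h' ▸ hs)
    have hut : u ≠ t := fun h' => Finset.disjoint_left.mp hd hu (h' ▸ ht)
    simp only [Finset.mem_insert, Finset.mem_singleton] at hx
    rcases hx with rfl | rfl | rfl
    · exact absurd (hmax t (by simp) hst.symm) (by omega)
    · exact absurd (hmax s (by simp) hst) (by omega)
    · exact hmax s (by simp) hus.symm
  omega
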